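/- Let U ⊂ ℝ^N be open, and let f : U → [0,∞) be a C²-smooth nonnegative function. Then for every compact set K contained in U there exists a constant C > 0 such that |df(x)|² ≤ C·f(x) for all x ∈ K. -/

import Mathlib

theorem gradient_sq_le_of_nonneg_C2 {N : ℕ} {U : Set (EuclideanSpace ℝ (Fin N))}
    (hU : IsOpen U) (f : EuclideanSpace ℝ (Fin N) → ℝ)
    (hf : ContDiffOn ℝ 2 f U) (hf0 : ∀ x ∈ U, 0 ≤ f x)
    (K : Set (EuclideanSpace ℝ (Fin N))) (hK : IsCompact K) (hKU : K ⊆ U) :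
    ∃ C > 0, ∀ x ∈ K, ‖fderiv ℝ f x‖ ^ 2 ≤ C * f x := by
  obtain ⟨δ, hδ0, hδU⟩ := hK.exists_cthickening_subset_open hU hKU
  set K' : Set (EuclideanSpace ℝ (Fin N)) := Metric.cthickening δ K with hK'def
  have hK'c : IsCompact K' := hK.cthickening (r := δ)
  have hK'U : K' ⊆ U := hδU
  -- differentiability facts
  have hdiff : ∀ y ∈ U, DifferentiableAt ℝ f y := fun y hy =>
    (hf.differentiableOn (by norm_num)).differentiableAt (hU.mem_nhds hy)
  have hf1 : ContDiffOn ℝ 1 (fderiv ℝ f) U :=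
    hf.fderiv_of_isOpen hU (by norm_num)
  have hdiff' : ∀ y ∈ U, DifferentiableAt ℝ (fderiv ℝ f) y := fun y hy =>
    (hf1.differentiableOn (by norm_num)).differentiableAt (hU.mem_nhds hy)
  -- bounds on compact thickening
  obtain ⟨M, hM⟩ := hK'c.exists_bound_of_continuousOn
    ((hf1.continuousOn_fderiv_of_isOpen hU le_rfl).mono hK'U)
  obtain ⟨D, hD⟩ := hK'c.exists_bound_of_continuousOn
    ((hf1.continuousOn).mono hK'U)
  set M1 : ℝ := max M 1 with hM1def
  set D1 : ℝ := max D 1 with hD1def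
  have hM1pos : (0:ℝ) < M1 := lt_of_lt_of_le one_pos (le_max_right _ _)
  have hD1pos : (0:ℝ) < D1 := lt_of_lt_of_le one_pos (le_max_right _ _)
  refine ⟨max (4 * M1) (2 * D1 / δ), lt_of_lt_of_le (by positivity) (le_max_left _ _), ?_⟩
  intro x hx
  have hxU : x ∈ U := hKU hx
  have hfx0 : 0 ≤ f x := hf0 x hxU
  set C : ℝ := max (4 * M1) (2 * D1 / δ) with hCdef
  have hball : ∀ t : ℝ, t ≤ δ → Metric.closedBall x t ⊆ K' := by
    intro t ht
    exact (Metric.closedBall_subset_closedBall ht).trans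
      (Metric.closedBall_subset_cthickening hx δ)
  by_cases hfd : fderiv ℝ f x = 0
  · rw [hfd]
    simpa using mul_nonneg (le_trans (by positivity) (le_max_left (4*M1) (2*D1/δ))) hfx0
  -- key Taylor-type inequality
  have key : ∀ t : ℝ, 0 ≤ t → t ≤ δ → 0 ≤ f x - t * ‖fderiv ℝ f x‖ + M1 * t ^ 2 := by
    intro t ht0 htδ
    have hsubK' : Metric.closedBall x t ⊆ K' := hball t htδ
    have hsubU : Metric.closedBall x t ⊆ U := hsubK'.trans hK'U
    -- Lipschitz bound on fderiv
    have hlip : ∀ y ∈ Metric.closedBall x t,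
        ‖fderiv ℝ f y - fderiv ℝ f x‖ ≤ M1 * t := by
      intro y hy
      have := (convex_closedBall x t).norm_image_sub_le_of_norm_fderiv_le
        (C := M1) (fun z hz => hdiff' z (hsubU hz))
        (fun z hz => le_trans (hM z (hsubK' hz)) (le_max_left _ _))
        (Metric.mem_closedBall_self ht0) hy
      calc ‖fderiv ℝ f y - fderiv ℝ f x‖ ≤ M1 * ‖y - x‖ := this
        _ ≤ M1 * t := by
            refine mul_le_mul_of_nonneg_left ?_ hM1pos.le
            simpa [dist_eq_norm] using hy
    -- second-order bound for g y = f y - (fderiv f x) y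
    have hquad : ∀ y ∈ Metric.closedBall x t,
        ‖f y - f x - (fderiv ℝ f x) (y - x)‖ ≤ M1 * t * ‖y - x‖ := by
      intro y hy
      have hg : ∀ z ∈ Metric.closedBall x t,
          DifferentiableAt ℝ (fun w => f w - (fderiv ℝ f x) w) z := fun z hz =>
        (hdiff z (hsubU hz)).sub (fderiv ℝ f x).differentiableAt
      have hgb : ∀ z ∈ Metric.closedBall x t,
          ‖fderiv ℝ (fun w => f w - (fderiv ℝ f x) w) z‖ ≤ M1 * t := by
        intro z hz
        rw [fderiv_fun_sub (hdiff z (hsubU hz)) (fderiv ℝ f x).differentiableAt,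
          (fderiv ℝ f x).fderiv]
        exact hlip z hz
      have := (convex_closedBall x t).norm_image_sub_le_of_norm_fderiv_le hg hgb
        (Metric.mem_closedBall_self ht0) hy
      have heq : (f y - (fderiv ℝ f x) y) - (f x - (fderiv ℝ f x) x)
          = f y - f x - (fderiv ℝ f x) (y - x) := by
        rw [map_sub]; ring
      rwa [heq] at this
    -- choose the direction
    set v : EuclideanSpace ℝ (Fin N) := (InnerProductSpace.toDual ℝ (EuclideanSpace ℝ (Fin N))).symm (fderiv ℝ f x) with hvdef
    have hvnorm : ‖v‖ = ‖fderiv ℝ f x‖ := LinearIsometryEquiv.norm_map _ _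
    have hvne : v ≠ 0 := by
      intro h
      apply hfd
      have : ‖fderiv ℝ f x‖ = 0 := by rw [← hvnorm, h, norm_zero]
      exact norm_eq_zero.mp this
    have hvpos : (0:ℝ) < ‖v‖ := norm_pos_iff.mpr hvne
    set y : EuclideanSpace ℝ (Fin N) := x + (-(t / ‖v‖)) • v with hydef
    have hyx : y - x = (-(t / ‖v‖)) • v := by rw [hydef]; abel
    have hynorm : ‖y - x‖ = t := by
      rw [hyx, norm_smul, norm_neg, Real.norm_eq_abs, abs_of_nonneg (by positivity)]
      field_simp
    have hymem : y ∈ Metric.closedBall x t := by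
      rw [Metric.mem_closedBall, dist_eq_norm, hynorm]
    have hfy : (fderiv ℝ f x) (y - x) = -(t * ‖fderiv ℝ f x‖) := by
      rw [hyx, map_smul]
      have hvv : (fderiv ℝ f x) v = ‖v‖ ^ 2 := by
        rw [hvdef]
        rw [show (fderiv ℝ f x) ((InnerProductSpace.toDual ℝ (EuclideanSpace ℝ (Fin N))).symm (fderiv ℝ f x)) =
          (inner ℝ ((InnerProductSpace.toDual ℝ (EuclideanSpace ℝ (Fin N))).symm (fderiv ℝ f x))
            ((InnerProductSpace.toDual ℝ (EuclideanSpace ℝ (Fin N))).symm (fderiv ℝ f x)) : ℝ) from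
          (InnerProductSpace.toDual_symm_apply).symm]
        rw [real_inner_self_eq_norm_sq]
      rw [hvv, ← hvnorm]
      have : ‖v‖ ≠ 0 := ne_of_gt hvpos
      field_simp
      linear_combination (-(‖v‖ * t)) * mul_inv_cancel₀ this
    have h1 := hquad y hymem
    rw [hynorm, hfy] at h1
    have hfy0 : 0 ≤ f y := hf0 y (hsubU hymem)
    nlinarith [abs_le.mp h1]
  -- now optimize
  by_cases hcase : ‖fderiv ℝ f x‖ / (2 * M1) ≤ δ
  · have hkey := key (‖fderiv ℝ f x‖ / (2 * M1)) (by positivity) hcase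
    have hCge : 4 * M1 ≤ C := le_max_left _ _
    have hfdpos : 0 < ‖fderiv ℝ f x‖ := norm_pos_iff.mpr hfd
    have h4 : ‖fderiv ℝ f x‖ ^ 2 ≤ 4 * M1 * f x := by
      have hM1ne : M1 ≠ 0 := ne_of_gt hM1pos
      have heq : f x - ‖fderiv ℝ f x‖ / (2 * M1) * ‖fderiv ℝ f x‖
          + M1 * (‖fderiv ℝ f x‖ / (2 * M1)) ^ 2
          = f x - ‖fderiv ℝ f x‖ ^ 2 / (4 * M1) := by
        field_simp
        ring
      rw [heq] at hkey
      have h6 := sub_nonneg.mp hkey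
      rw [div_le_iff₀ (by positivity)] at h6
      linarith
    calc ‖fderiv ℝ f x‖ ^ 2 ≤ 4 * M1 * f x := h4
      _ ≤ C * f x := mul_le_mul_of_nonneg_right hCge hfx0
  · push_neg at hcase
    have hkey := key δ hδ0.le le_rfl
    have hDx : ‖fderiv ℝ f x‖ ≤ D1 := le_trans (hD x (hball 0 hδ0.le
      (Metric.mem_closedBall_self le_rfl))) (le_max_left _ _)
    have hfdpos : 0 < ‖fderiv ℝ f x‖ := norm_pos_iff.mpr hfd
    -- M1*δ < ‖f'x‖/2
    have hMδ : M1 * δ < ‖fderiv ℝ f x‖ / 2 := by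
      rw [lt_div_iff₀ (by positivity)] at hcase
      nlinarith
    have h5 : ‖fderiv ℝ f x‖ ≤ 2 * f x / δ := by
      rw [le_div_iff₀ hδ0]
      nlinarith
    have hCge : 2 * D1 / δ ≤ C := le_max_right _ _
    calc ‖fderiv ℝ f x‖ ^ 2 = ‖fderiv ℝ f x‖ * ‖fderiv ℝ f x‖ := sq _
      _ ≤ D1 * (2 * f x / δ) := mul_le_mul hDx h5 hfdpos.le hD1pos.le
      _ = (2 * D1 / δ) * f x := by field_simp
      _ ≤ C * f x := mul_le_mul_of_nonneg_right hCge hfx0
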